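/- Let C be a triangulated category endowed with a weight structure w, let M be an object of C, and let (0 = Y_l → Y_{l+1} → ⋯ → Y_m = M) be a bounded Postnikov tower for M, i.e., a sequence of morphisms together with distinguished triangles Y_{i−1} → Y_i → M_i → Y_{i−1}[1] for l < i ≤ m. If M_i ∈ C_{w=i} for every i with l < i ≤ m, then the tower is a weight Postnikov tower: for every such i one has Y_i ∈ C_{w≤i} and the cone of the composed morphism Y_i → M belongs to C_{w≥i+1}. -/

import Mathlib

open CategoryTheory CategoryTheory.Limits CategoryTheory.Pretriangulated CategoryTheory.Category
open scoped ZeroObject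

universe w v u

/-- `X` is a retract of `Y`: the identity of `X` factors through `Y`. -/
def IsRetract {D : Type*} [Category D] (X Y : D) : Prop :=
  ∃ (i : X ⟶ Y) (r : Y ⟶ X), i ≫ r = 𝟙 X

/-- A weight structure on a triangulated category `C`. -/
structure WeightStructure (C : Type u) [Category.{v} C] [Preadditive C] [HasZeroObject C]
    [HasShift C ℤ] [∀ n : ℤ, (shiftFunctor C n).Additive] [Pretriangulated C] where
  /-- the class `C_{w≤0}` -/
  LE : Set C
  /-- the class `C_{w≥0}` -/
  GE : Set C
  le_retract : ∀ ⦃X Y : C⦄, IsRetract X Y → Y ∈ LE → X ∈ LE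
  ge_retract : ∀ ⦃X Y : C⦄, IsRetract X Y → Y ∈ GE → X ∈ GE
  le_shift : ∀ X : C, X ∈ LE → X⟦(-1 : ℤ)⟧ ∈ LE
  ge_shift : ∀ X : C, X ∈ GE → X⟦(1 : ℤ)⟧ ∈ GE
  orthogonal : ∀ ⦃X Y : C⦄, X ∈ LE → Y ∈ GE → ∀ f : X ⟶ Y⟦(1 : ℤ)⟧, f = 0
  exists_decomp : ∀ M : C, ∃ (B A : C) (f : B ⟶ M) (g : M ⟶ A) (h : A ⟶ B⟦(1 : ℤ)⟧),
    B ∈ LE ∧ A⟦(-1 : ℤ)⟧ ∈ GE ∧ Triangle.mk f g h ∈ distTriang C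

namespace WeightStructure

variable {C : Type u} [Category.{v} C] [Preadditive C] [HasZeroObject C]
  [HasShift C ℤ] [∀ n : ℤ, (shiftFunctor C n).Additive] [Pretriangulated C]

/-- the class `C_{w≤i} = C_{w≤0}[i]` -/
def leSet (w : WeightStructure C) (i : ℤ) : Set C := {X : C | X⟦-i⟧ ∈ w.LE}

/-- the class `C_{w≥i} = C_{w≥0}[i]` -/
def geSet (w : WeightStructure C) (i : ℤ) : Set C := {X : C | X⟦-i⟧ ∈ w.GE}

/-- the class `C_{w=i} = C_{w≤i} ∩ C_{w≥i}` -/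
def eqSet (w : WeightStructure C) (i : ℤ) : Set C := w.leSet i ∩ w.geSet i

end WeightStructure

variable {C : Type u} [Category.{v} C] [Preadditive C] [HasZeroObject C]
  [HasShift C ℤ] [∀ n : ℤ, (shiftFunctor C n).Additive] [Pretriangulated C]

section Aux

variable (w : WeightStructure C)

lemma isRetract_of_iso {X Y : C} (e : X ≅ Y) : IsRetract X Y :=
  ⟨e.hom, e.inv, e.hom_inv_id⟩

lemma ws_le_iso {X Y : C} (e : X ≅ Y) (h : Y ∈ w.LE) : X ∈ w.LE :=
  w.le_retract (isRetract_of_iso e) h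

lemma ws_ge_iso {X Y : C} (e : X ≅ Y) (h : Y ∈ w.GE) : X ∈ w.GE :=
  w.ge_retract (isRetract_of_iso e) h

/-- `X⟦a⟧⟦b⟧ ≅ X⟦c⟧` when `a + b = c`. -/
noncomputable def shiftShiftIso (a b c : ℤ) (h : a + b = c) (X : C) :
    (X⟦a⟧)⟦b⟧ ≅ X⟦c⟧ :=
  ((shiftFunctorAdd' C a b c h).app X).symm

lemma ws_leSet_retract {X Y : C} {i : ℤ} (h : IsRetract X Y) (hY : Y ∈ w.leSet i) :
    X ∈ w.leSet i := by
  obtain ⟨i₀, r₀, hir⟩ := h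
  exact w.le_retract ⟨i₀⟦-i⟧', r₀⟦-i⟧',
    by rw [← Functor.map_comp, hir, CategoryTheory.Functor.map_id]⟩ hY

lemma ws_geSet_retract {X Y : C} {i : ℤ} (h : IsRetract X Y) (hY : Y ∈ w.geSet i) :
    X ∈ w.geSet i := by
  obtain ⟨i₀, r₀, hir⟩ := h
  exact w.ge_retract ⟨i₀⟦-i⟧', r₀⟦-i⟧',
    by rw [← Functor.map_comp, hir, CategoryTheory.Functor.map_id]⟩ hY

lemma ws_leSet_iso {X Y : C} {i : ℤ} (e : X ≅ Y) (hY : Y ∈ w.leSet i) : X ∈ w.leSet i :=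
  ws_leSet_retract w (isRetract_of_iso e) hY

lemma ws_geSet_iso {X Y : C} {i : ℤ} (e : X ≅ Y) (hY : Y ∈ w.geSet i) : X ∈ w.geSet i :=
  ws_geSet_retract w (isRetract_of_iso e) hY

lemma ws_mem_leSet_zero {X : C} (h : X ∈ w.LE) : X ∈ w.leSet 0 :=
  w.le_retract (isRetract_of_iso ((shiftFunctorZero C ℤ).app X)) h

lemma ws_mem_geSet_zero {X : C} (h : X ∈ w.GE) : X ∈ w.geSet 0 :=
  w.ge_retract (isRetract_of_iso ((shiftFunctorZero C ℤ).app X)) h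

lemma ws_leSet_shift {X : C} {a : ℤ} (hX : X ∈ w.leSet a) (n b : ℤ) (h : b = a + n) :
    X⟦n⟧ ∈ w.leSet b :=
  w.le_retract (isRetract_of_iso (shiftShiftIso n (-b) (-a) (by omega) X)) hX

lemma ws_geSet_shift {X : C} {a : ℤ} (hX : X ∈ w.geSet a) (n b : ℤ) (h : b = a + n) :
    X⟦n⟧ ∈ w.geSet b :=
  w.ge_retract (isRetract_of_iso (shiftShiftIso n (-b) (-a) (by omega) X)) hX

lemma ws_leSet_mono {i j : ℤ} (hij : i ≤ j) : w.leSet i ⊆ w.leSet j := by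
  refine Int.le_induction (motive := fun j _ => w.leSet i ⊆ w.leSet j) ?_ ?_ j hij
  · exact fun X hX => hX
  · intro n hn ih X hX
    have h1 : (X⟦-n⟧)⟦(-1 : ℤ)⟧ ∈ w.LE := w.le_shift _ (ih hX)
    exact w.le_retract
      (isRetract_of_iso ((shiftShiftIso (-n) (-1) (-(n + 1)) (by omega) X).symm)) h1

lemma ws_geSet_anti {i j : ℤ} (hij : i ≤ j) : w.geSet j ⊆ w.geSet i := by
  refine Int.le_induction (motive := fun j _ => w.geSet j ⊆ w.geSet i) ?_ ?_ j hij
  · exact fun X hX => hX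
  · intro n hn ih X hX
    refine ih ?_
    have h1 : (X⟦-(n + 1)⟧)⟦(1 : ℤ)⟧ ∈ w.GE := w.ge_shift _ hX
    exact w.ge_retract
      (isRetract_of_iso ((shiftShiftIso (-(n + 1)) 1 (-n) (by omega) X).symm)) h1

lemma ws_zero_mem_leSet {X : C} (hX : IsZero X) (i : ℤ) : X ∈ w.leSet i := by
  obtain ⟨B, A, f, g, h, hB, hA, ht⟩ := w.exists_decomp X
  have hz : IsZero (X⟦-i⟧) := (shiftFunctor C (-i)).map_isZero hX
  exact w.le_retract ⟨0, 0, hz.eq_of_src _ _⟩ hB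

lemma ws_orth {X Q : C} {i j : ℤ} (hX : X ∈ w.leSet i) (hQ : Q ∈ w.geSet j) (hij : i < j)
    (f : X ⟶ Q) : f = 0 := by
  have hQ' : Q ∈ w.geSet (i + 1) := ws_geSet_anti w (by omega) hQ
  have e : (Q⟦-(i + 1)⟧)⟦(1 : ℤ)⟧ ≅ Q⟦-i⟧ := shiftShiftIso (-(i + 1)) 1 (-i) (by omega) Q
  have h0 : (shiftFunctor C (-i)).map f ≫ e.inv = 0 := w.orthogonal hX hQ' _
  have h1 : (shiftFunctor C (-i)).map f = 0 := by
    have : (shiftFunctor C (-i)).map f = ((shiftFunctor C (-i)).map f ≫ e.inv) ≫ e.hom := by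
      simp
    rw [this, h0, zero_comp]
  exact (shiftFunctor C (-i)).map_injective (by rw [h1, Functor.map_zero])

lemma ws_ext_le_zero (T : Triangle C) (hT : T ∈ distTriang C)
    (h1 : T.obj₁ ∈ w.LE) (h3 : T.obj₃ ∈ w.LE) : T.obj₂ ∈ w.LE := by
  obtain ⟨B, A, f, g, h, hB, hA, ht⟩ := w.exists_decomp T.obj₂
  have e : (A⟦(-1 : ℤ)⟧)⟦(1 : ℤ)⟧ ≅ A := (shiftFunctorCompIsoId C (-1) 1 (by omega)).app A
  have hom_zero : ∀ {P : C}, P ∈ w.LE → ∀ u : P ⟶ A, u = 0 := by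
    intro P hP u
    have h0 := w.orthogonal hP hA (u ≫ e.inv)
    have : u = (u ≫ e.inv) ≫ e.hom := by simp
    rw [this, h0, zero_comp]
  have hg : g = 0 := by
    obtain ⟨v, hv⟩ := Triangle.yoneda_exact₂ T hT g (hom_zero h1 _)
    rw [hv, hom_zero h3 v, comp_zero]
  obtain ⟨r, hr⟩ := Triangle.coyoneda_exact₂ _ ht (𝟙 T.obj₂) (by
    show 𝟙 T.obj₂ ≫ g = 0; rw [hg, comp_zero])
  exact w.le_retract ⟨r, f, hr.symm⟩ hB

lemma ws_ext_ge_one (T : Triangle C) (hT : T ∈ distTriang C)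
    (h1 : T.obj₁ ∈ w.geSet 1) (h3 : T.obj₃ ∈ w.geSet 1) : T.obj₂ ∈ w.geSet 1 := by
  obtain ⟨B, A, f, g, h, hB, hA, ht⟩ := w.exists_decomp T.obj₂
  have hB0 : B ∈ w.leSet 0 := ws_mem_leSet_zero w hB
  have hf : f = 0 := by
    have hfg : f ≫ T.mor₂ = 0 := ws_orth w hB0 h3 (by omega) _
    obtain ⟨b, hb⟩ := Triangle.coyoneda_exact₂ T hT f hfg
    rw [hb, ws_orth w hB0 h1 (by omega) b, zero_comp]
  obtain ⟨s, hs⟩ := Triangle.yoneda_exact₂ _ ht (𝟙 T.obj₂) (by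
    show f ≫ 𝟙 T.obj₂ = 0; rw [hf, zero_comp])
  have hret : IsRetract T.obj₂ A := ⟨g, s, hs.symm⟩
  exact ws_geSet_retract w hret (hA : A ∈ w.geSet 1)

lemma ws_ext_le (i : ℤ) (T : Triangle C) (hT : T ∈ distTriang C)
    (h1 : T.obj₁ ∈ w.leSet i) (h3 : T.obj₃ ∈ w.leSet i) : T.obj₂ ∈ w.leSet i :=
  ws_ext_le_zero w _ (Pretriangulated.Triangle.shift_distinguished T hT (-i)) h1 h3

end Aux

/-- Proposition 2.1.3(5): a bounded Postnikov tower
`(0 =) Y_l → Y_{l+1} → ⋯ → Y_m = M` with factors `M_i ∈ C_{w=i}` is a weight Postnikov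
tower: `Y_i ∈ C_{w≤i}` and any cone of `Y_i → M` lies in `C_{w≥i+1}`, for `l < i ≤ m`. -/
theorem bounded_postnikov_tower_is_weight_tower (w : WeightStructure C)
    (l m : ℤ) (hlm : l ≤ m)
    (Y : ℤ → C) (φ : ∀ i : ℤ, Y (i - 1) ⟶ Y i)
    (N : ℤ → C) (g : ∀ i : ℤ, Y i ⟶ N i) (d : ∀ i : ℤ, N i ⟶ (Y (i - 1))⟦(1 : ℤ)⟧)
    (hYl : IsZero (Y l))
    (π : ∀ i : ℤ, Y i ⟶ Y m) (hπm : π m = 𝟙 (Y m))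
    (hπ : ∀ i : ℤ, φ i ≫ π i = π (i - 1))
    (htri : ∀ i : ℤ, l < i → i ≤ m → Triangle.mk (φ i) (g i) (d i) ∈ (distTriang C))
    (hN : ∀ i : ℤ, l < i → i ≤ m → N i ∈ w.eqSet i) :
    ∀ i : ℤ, l < i → i ≤ m →
      Y i ∈ w.leSet i ∧
      (∀ (Z : C) (u : Y m ⟶ Z) (v : Z ⟶ (Y i)⟦(1 : ℤ)⟧),
        Triangle.mk (π i) u v ∈ (distTriang C) → Z ∈ w.geSet (i + 1)) := by
  -- Part 1: `Y i ∈ C_{w ≤ i}` by ascending induction.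
  have part1 : ∀ i : ℤ, l ≤ i → i ≤ m → Y i ∈ w.leSet i := by
    intro i hli
    refine Int.le_induction (motive := fun i _ => i ≤ m → Y i ∈ w.leSet i) ?_ ?_ i hli
    · exact fun _ => ws_zero_mem_leSet w hYl l
    · intro n hn ih hn1m
      have ht := htri (n + 1) (by omega) hn1m
      have h1 : Y (n + 1 - 1) ∈ w.leSet (n + 1) := by
        rw [show (n : ℤ) + 1 - 1 = n from by omega]
        exact ws_leSet_mono w (by omega) (ih (by omega))
      exact ws_ext_le w (n + 1) _ ht h1 ((hN (n + 1) (by omega) hn1m).1)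
  intro i hli him
  refine ⟨part1 i (by omega) him, ?_⟩
  -- Key claim: surjectivity/injectivity of `π j` on maps from `C_{w ≤ i}`.
  have key : ∀ j : ℤ, j ≤ m → i ≤ j →
      ∀ (P : C), P ∈ w.leSet i →
        (∀ h : P ⟶ Y m, ∃ k : P ⟶ Y j, k ≫ π j = h) ∧
        (∀ h : P ⟶ (Y j)⟦(1 : ℤ)⟧, h ≫ (π j)⟦(1 : ℤ)⟧' = 0 → h = 0) := by
    intro j hjm
    refine Int.le_induction_down (motive := fun j _ => i ≤ j →
      ∀ (P : C), P ∈ w.leSet i →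
        (∀ h : P ⟶ Y m, ∃ k : P ⟶ Y j, k ≫ π j = h) ∧
        (∀ h : P ⟶ (Y j)⟦(1 : ℤ)⟧, h ≫ (π j)⟦(1 : ℤ)⟧' = 0 → h = 0)) ?_ ?_ j hjm
    · intro _ P hP
      constructor
      · intro h
        exact ⟨h, by rw [hπm, comp_id]⟩
      · intro h hh
        rw [hπm] at hh
        simpa using hh
    · intro n hn ih hin1 P hP
      obtain ⟨surjn, injn⟩ := ih (by omega) P hP
      have ht := htri n (by omega) hn
      have hNn := hN n (by omega) hn
      constructor
      · intro h
        obtain ⟨k, hk⟩ := surjn h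
        have hkg : k ≫ g n = 0 := ws_orth w hP hNn.2 (by omega) _
        obtain ⟨k', hk'⟩ := Triangle.coyoneda_exact₂ _ ht k hkg
        refine ⟨k', ?_⟩
        exact (congrArg (k' ≫ ·) (hπ n).symm).trans ((assoc k' (φ n) (π n)).symm.trans
          ((congrArg (· ≫ π n) hk'.symm).trans hk))
      · intro h hh
        have hφ : h ≫ (φ n)⟦(1 : ℤ)⟧' = 0 := by
          apply injn
          rw [assoc, ← Functor.map_comp, hπ n, hh]
        obtain ⟨k, hk⟩ := Triangle.coyoneda_exact₁ _ ht h hφ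
        rw [hk, ws_orth w hP hNn.2 (by omega) k]; exact zero_comp
  -- Every map from an object of `C_{w ≤ i}` to a cone `Z` of `π i` vanishes.
  intro Z u v hTZ
  have hzero : ∀ (P : C), P ∈ w.leSet i → ∀ f : P ⟶ Z, f = 0 := by
    intro P hP f
    obtain ⟨surji, inji⟩ := key i him (le_refl i) P hP
    have h2 : (f ≫ v) ≫ (π i)⟦(1 : ℤ)⟧' = 0 := by
      rw [assoc]
      have h3 := comp_distTriang_mor_zero₃₁ _ hTZ
      exact (congrArg (f ≫ ·) h3).trans comp_zero
    have hfv : f ≫ v = 0 := inji _ h2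
    obtain ⟨k, hk⟩ := Triangle.coyoneda_exact₃ _ hTZ f hfv
    obtain ⟨k', hk'⟩ := surji k
    have h4 := comp_distTriang_mor_zero₁₂ _ hTZ
    exact hk.trans ((congrArg (· ≫ (Triangle.mk (π i) u v).mor₂) hk'.symm).trans
      ((assoc _ _ _).trans ((congrArg (k' ≫ ·) h4).trans comp_zero)))
  -- Decompose `Z⟦-i⟧` and shift back by `i`.
  obtain ⟨B, A, f0, g0, h0, hB, hA, ht0⟩ := w.exists_decomp (Z⟦-i⟧)
  have ht1 := Pretriangulated.Triangle.shift_distinguished _ ht0 i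
  set T1 := (CategoryTheory.shiftFunctor (Triangle C) i).obj (Triangle.mk f0 g0 h0) with hT1
  have e : ((Z⟦-i⟧)⟦i⟧ : C) ≅ Z := (shiftFunctorCompIsoId C (-i) i (by omega)).app Z
  have hB' : (B⟦i⟧ : C) ∈ w.leSet i :=
    ws_leSet_shift w (ws_mem_leSet_zero w hB) i i (by omega)
  have hmor1 : T1.mor₁ = 0 := by
    have hz : T1.mor₁ ≫ e.hom = 0 := hzero _ hB' _
    have : T1.mor₁ = (T1.mor₁ ≫ e.hom) ≫ e.inv := 
      ((assoc _ _ _).trans ((congrArg (T1.mor₁ ≫ ·) e.hom_inv_id).trans (comp_id _))).symm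
    rw [this, hz]; exact zero_comp
  obtain ⟨s, hs⟩ := Triangle.yoneda_exact₂ T1 ht1 (𝟙 T1.obj₂) (by rw [hmor1, zero_comp])
  have hret : IsRetract Z ((A⟦i⟧ : C)) := by
    refine ⟨e.inv ≫ T1.mor₂, s ≫ e.hom, ?_⟩
    exact (assoc e.inv T1.mor₂ (s ≫ e.hom)).trans ((congrArg (e.inv ≫ ·) (assoc T1.mor₂ s e.hom).symm).trans
      (by rw [← hs]; exact (congrArg (e.inv ≫ ·) (id_comp e.hom)).trans e.inv_hom_id))
  have hA1 : (A : C) ∈ w.geSet 1 := hA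
  have hAi : (A⟦i⟧ : C) ∈ w.geSet (i + 1) := ws_geSet_shift w hA1 i (i + 1) (by omega)
  exact ws_geSet_retract w hret hAi
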